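/- Let n ≥ 1 be an integer. Then ∫₀^∞ x^{n−1} · H_{n−1}(x) · e^{−x²} dx = (√π / 2) · (n−1)!, where H_m denotes the m-th physicists' Hermite polynomial, defined by the Rodrigues formula H_m(x) = (−1)^m e^{x²} · (d^m/dx^m)(e^{−t²})(x). -/

import Mathlib

open MeasureTheory Real

private lemma hasDerivAt_poly_gauss (P : Polynomial ℝ) (x : ℝ) :
    HasDerivAt (fun x : ℝ => P.eval x * Real.exp (-x ^ 2))
      ((P.derivative - 2 * Polynomial.X * P).eval x * Real.exp (-x ^ 2)) x := by
  have h1 : HasDerivAt (fun x : ℝ => P.eval x) (P.derivative.eval x) x := P.hasDerivAt x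
  have h0 : HasDerivAt (fun x : ℝ => -x ^ 2) (-(2 * x)) x := by
    simpa using (hasDerivAt_pow 2 x).fun_neg
  have h2 : HasDerivAt (fun x : ℝ => Real.exp (-x ^ 2))
      (Real.exp (-x ^ 2) * (-(2 * x))) x := h0.exp
  have : HasDerivAt (fun x : ℝ => P.eval x * Real.exp (-x ^ 2))
      (P.derivative.eval x * Real.exp (-x ^ 2) + P.eval x * (Real.exp (-x ^ 2) * (-(2 * x)))) x :=
    h1.fun_mul h2
  convert this using 1
  simp only [Polynomial.eval_sub, Polynomial.eval_mul, Polynomial.eval_ofNat, Polynomial.eval_X]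
  ring

private lemma iter_repr (m : ℕ) :
    ∃ P : Polynomial ℝ, ∀ x : ℝ,
      iteratedDeriv m (fun t : ℝ => Real.exp (-t ^ 2)) x = P.eval x * Real.exp (-x ^ 2) := by
  induction m with
  | zero => exact ⟨1, fun x => by simp [iteratedDeriv_zero]⟩
  | succ m ih =>
    obtain ⟨P, hP⟩ := ih
    refine ⟨P.derivative - 2 * Polynomial.X * P, fun x => ?_⟩
    rw [iteratedDeriv_succ, funext hP]
    exact (hasDerivAt_poly_gauss P x).deriv

private lemma integrable_poly_gauss (P : Polynomial ℝ) :
    IntegrableOn (fun x : ℝ => P.eval x * Real.exp (-x ^ 2)) (Set.Ioi 0) := by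
  have hfun : (fun x : ℝ => P.eval x * Real.exp (-x ^ 2))
      = fun x : ℝ => ∑ i ∈ Finset.range (P.natDegree + 1),
          P.coeff i * (x ^ i * Real.exp (-x ^ 2)) := by
    funext x
    rw [Polynomial.eval_eq_sum_range, Finset.sum_mul]
    exact Finset.sum_congr rfl fun i _ => by ring
  rw [hfun]
  apply integrable_finset_sum
  intro i _
  apply Integrable.const_mul
  have h := integrableOn_rpow_mul_exp_neg_mul_sq (b := 1) one_pos
    (s := (i : ℝ)) (by have := Nat.cast_nonneg (α := ℝ) i; linarith)
  simpa [Real.rpow_natCast, IntegrableOn] using h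

private lemma tendsto_poly_gauss (P : Polynomial ℝ) :
    Filter.Tendsto (fun x : ℝ => P.eval x * Real.exp (-x ^ 2)) Filter.atTop (nhds 0) := by
  have hfun : (fun x : ℝ => P.eval x * Real.exp (-x ^ 2))
      = fun x : ℝ => ∑ i ∈ Finset.range (P.natDegree + 1),
          P.coeff i * (x ^ i * Real.exp (-x ^ 2)) := by
    funext x
    rw [Polynomial.eval_eq_sum_range, Finset.sum_mul]
    exact Finset.sum_congr rfl fun i _ => by ring
  rw [hfun]
  rw [show (0 : ℝ) = ∑ i ∈ Finset.range (P.natDegree + 1), P.coeff i * 0 by simp]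
  apply tendsto_finset_sum
  intro i _
  apply Filter.Tendsto.const_mul
  have hexp : Filter.Tendsto (fun x : ℝ => Real.exp (-(1 / 2) * x)) Filter.atTop (nhds 0) := by
    apply Real.tendsto_exp_atBot.comp
    exact (Filter.tendsto_const_mul_atBot_of_neg (by norm_num)).mpr Filter.tendsto_id
  have h := (rpow_mul_exp_neg_mul_sq_isLittleO_exp_neg one_pos (i : ℝ)).isBigO.trans_tendsto hexp
  simpa [Real.rpow_natCast] using h

private lemma key (m : ℕ) :
    ∫ x in Set.Ioi (0 : ℝ), x ^ m * iteratedDeriv m (fun t : ℝ => Real.exp (-t ^ 2)) x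
      = (-1) ^ m * (Nat.factorial m : ℝ) * (Real.sqrt π / 2) := by
  induction m with
  | zero =>
    simp only [pow_zero, one_mul, iteratedDeriv_zero, Nat.factorial_zero, Nat.cast_one]
    have h := integral_gaussian_Ioi 1
    simp only [neg_mul, one_mul, div_one] at h
    rw [h]
  | succ m ih =>
    obtain ⟨P, hP⟩ := iter_repr m
    obtain ⟨Q, hQ⟩ := iter_repr (m + 1)
    set g := fun t : ℝ => Real.exp (-t ^ 2) with hg
    -- derivative of x^(m+1) * iteratedDeriv m g x
    have hF : ∀ x : ℝ, HasDerivAt (fun x : ℝ => x ^ (m + 1) * iteratedDeriv m g x)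
        ((m + 1 : ℝ) * x ^ m * iteratedDeriv m g x + x ^ (m + 1) * iteratedDeriv (m + 1) g x) x := by
      intro x
      have h1 : HasDerivAt (fun x : ℝ => x ^ (m + 1)) ((m + 1 : ℝ) * x ^ m) x := by
        simpa using hasDerivAt_pow (m + 1) x
      have heq : iteratedDeriv m g = fun x : ℝ => P.eval x * Real.exp (-x ^ 2) := funext hP
      have h2 : HasDerivAt (iteratedDeriv m g) (iteratedDeriv (m + 1) g x) x := by
        rw [iteratedDeriv_succ]
        have hd : DifferentiableAt ℝ (iteratedDeriv m g) x := by
          rw [heq]; exact (hasDerivAt_poly_gauss P x).differentiableAt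
        exact hd.hasDerivAt
      simpa using h1.fun_mul h2
    -- tendsto 0 at top
    have hT : Filter.Tendsto (fun x : ℝ => x ^ (m + 1) * iteratedDeriv m g x)
        Filter.atTop (nhds 0) := by
      have := tendsto_poly_gauss (Polynomial.X ^ (m + 1) * P)
      refine this.congr fun x => ?_
      rw [hP x]
      simp only [Polynomial.eval_mul, Polynomial.eval_pow, Polynomial.eval_X]
      ring
    -- integrability of pieces
    have hint1 : IntegrableOn
        (fun x : ℝ => (m + 1 : ℝ) * x ^ m * iteratedDeriv m g x) (Set.Ioi 0) := by
      have := integrable_poly_gauss (Polynomial.C ((m : ℝ) + 1) * Polynomial.X ^ m * P)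
      refine this.congr_fun (fun x _ => ?_) measurableSet_Ioi
      rw [hP x]
      simp only [Polynomial.eval_mul, Polynomial.eval_pow, Polynomial.eval_X, Polynomial.eval_C]
      ring
    have hint2 : IntegrableOn
        (fun x : ℝ => x ^ (m + 1) * iteratedDeriv (m + 1) g x) (Set.Ioi 0) := by
      have := integrable_poly_gauss (Polynomial.X ^ (m + 1) * Q)
      refine this.congr_fun (fun x _ => ?_) measurableSet_Ioi
      rw [hQ x]
      simp only [Polynomial.eval_mul, Polynomial.eval_pow, Polynomial.eval_X]
      ring
    have hintsum : IntegrableOn (fun x : ℝ =>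
        (m + 1 : ℝ) * x ^ m * iteratedDeriv m g x
          + x ^ (m + 1) * iteratedDeriv (m + 1) g x) (Set.Ioi 0) := hint1.add hint2
    have h0 : (∫ x in Set.Ioi (0 : ℝ),
        ((m + 1 : ℝ) * x ^ m * iteratedDeriv m g x
          + x ^ (m + 1) * iteratedDeriv (m + 1) g x)) = 0 := by
      have := integral_Ioi_of_hasDerivAt_of_tendsto' (fun x _ => hF x) hintsum hT
      rw [this]
      simp
    rw [integral_add hint1 hint2] at h0
    have hsplit : (∫ x in Set.Ioi (0 : ℝ), (m + 1 : ℝ) * x ^ m * iteratedDeriv m g x)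
        = (m + 1 : ℝ) * ∫ x in Set.Ioi (0 : ℝ), x ^ m * iteratedDeriv m g x := by
      rw [← integral_const_mul]
      congr 1
      funext x
      ring
    rw [hsplit, ih] at h0
    have : (∫ x in Set.Ioi (0 : ℝ), x ^ (m + 1) * iteratedDeriv (m + 1) g x)
        = -((m + 1 : ℝ) * ((-1) ^ m * (Nat.factorial m : ℝ) * (Real.sqrt π / 2))) := by
      linarith
    rw [this, Nat.factorial_succ]
    push_cast
    ring

/-- For `n ≥ 1`, `∫₀^∞ x^(n-1) H_(n-1)(x) e^(-x²) dx = (√π / 2) (n-1)!`, where `H_m` is the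
`m`-th physicists' Hermite polynomial, given by the Rodrigues formula
`H_m(x) = (-1)^m e^(x²) (d^m/dx^m)(e^(-t²))(x)`. -/
theorem integral_hermite (n : ℕ) (hn : 1 ≤ n) (H : ℕ → ℝ → ℝ)
    (hH : ∀ (m : ℕ) (x : ℝ),
      H m x = (-1) ^ m * Real.exp (x ^ 2) * iteratedDeriv m (fun t : ℝ => Real.exp (-t ^ 2)) x) :
    ∫ x in Set.Ioi (0 : ℝ), x ^ (n - 1) * H (n - 1) x * Real.exp (-x ^ 2)
      = Real.sqrt π / 2 * (Nat.factorial (n - 1) : ℝ) := by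
  set m := n - 1
  have hrw : (fun x : ℝ => x ^ m * H m x * Real.exp (-x ^ 2))
      = fun x : ℝ => (-1 : ℝ) ^ m
          * (x ^ m * iteratedDeriv m (fun t : ℝ => Real.exp (-t ^ 2)) x) := by
    funext x
    rw [hH]
    have he : Real.exp (x ^ 2) * Real.exp (-x ^ 2) = 1 := by
      rw [← Real.exp_add]
      simp
    calc x ^ m * ((-1) ^ m * Real.exp (x ^ 2)
            * iteratedDeriv m (fun t : ℝ => Real.exp (-t ^ 2)) x) * Real.exp (-x ^ 2)
        = (-1 : ℝ) ^ m * (x ^ m * iteratedDeriv m (fun t : ℝ => Real.exp (-t ^ 2)) x)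
            * (Real.exp (x ^ 2) * Real.exp (-x ^ 2)) := by ring
      _ = _ := by rw [he]; ring
  rw [hrw, integral_const_mul, key m, ← mul_assoc, ← mul_assoc, ← pow_add]
  rw [Even.neg_one_pow ⟨m, rfl⟩]
  ring
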